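/- If v is a vertex of odd degree in a graph G such that G − v is a forest, then G admits an edge-coloring with colors {1,2} that is odd at every vertex other than v, and such that at v the number of edges colored 1 is odd and the number of edges colored 2 is even. -/

import Mathlib

open SimpleGraph Finset

variable {V : Type*} [Fintype V] [DecidableEq V]

/-- Number of edges incident to `v` receiving color `i` under the edge-coloring `f`. -/
def colorCount (G : SimpleGraph V) [DecidableRel G.Adj] {k : ℕ}
    (f : Sym2 V → Fin k) (v : V) (i : Fin k) : ℕ :=
  ((G.incidenceFinset v).filter (fun e => f e = i)).card

/-- The edge-coloring `f` is odd at the vertex `v`: every color appearing at `v`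
appears an odd number of times at `v`. -/
def OddAt (G : SimpleGraph V) [DecidableRel G.Adj] {k : ℕ}
    (f : Sym2 V → Fin k) (v : V) : Prop :=
  ∀ i : Fin k, colorCount G f v i = 0 ∨ Odd (colorCount G f v i)

/-- An odd edge-coloring: odd at every vertex. -/
def IsOddColoring (G : SimpleGraph V) [DecidableRel G.Adj] {k : ℕ}
    (f : Sym2 V → Fin k) : Prop :=
  ∀ v : V, OddAt G f v

/-- The odd chromatic index: least `k` admitting an odd `k`-edge-coloring. -/
noncomputable def oddChromIndex (G : SimpleGraph V) [DecidableRel G.Adj] : ℕ :=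
  sInf {k | ∃ f : Sym2 V → Fin k, IsOddColoring G f}

namespace OddEdgeAux

variable (G : SimpleGraph V) (v : V)

/-- The graph `G` with the vertex `v` cut off (edges at `v` removed). -/
def F : SimpleGraph V where
  Adj a b := G.Adj a b ∧ a ≠ v ∧ b ≠ v
  symm := ⟨fun a b h => ⟨h.1.symm, h.2.2, h.2.1⟩⟩
  loopless := ⟨fun a h => G.loopless.irrefl a h.1⟩

lemma walk_to_v : ∀ {a b : V} (_ : (F G v).Walk a b), b = v → a = v := by
  intro a b p
  induction p with
  | nil => exact id
  | cons h p ih => intro hb; exact absurd (ih hb) h.2.2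

lemma reach_v {a : V} (h : (F G v).Reachable a v) : a = v :=
  h.elim fun p => walk_to_v G v p rfl

/-- The projection from the induced graph on `{v}ᶜ` to `F`. -/
def down : G.induce ({v}ᶜ : Set V) →g F G v where
  toFun := Subtype.val
  map_rel' := by
    intro x y h
    exact ⟨h, Set.mem_compl_singleton_iff.mp x.2, Set.mem_compl_singleton_iff.mp y.2⟩

/-- Lift a walk in `F` to the induced graph on `{v}ᶜ`. -/
def liftW : ∀ {a b : V} (_ : (F G v).Walk a b) (ha : a ≠ v) (hb : b ≠ v),
    (G.induce ({v}ᶜ : Set V)).Walk ⟨a, Set.mem_compl_singleton_iff.mpr ha⟩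
      ⟨b, Set.mem_compl_singleton_iff.mpr hb⟩
  | _, _, Walk.nil, _, _ => Walk.nil
  | _, _, Walk.cons h p, _, hb => Walk.cons (by exact h.1) (liftW p h.2.2 hb)

lemma liftW_map : ∀ {a b : V} (p : (F G v).Walk a b) (ha : a ≠ v) (hb : b ≠ v),
    (liftW G v p ha hb).map (down G v) = p
  | _, _, Walk.nil, _, _ => rfl
  | _, _, Walk.cons h p, ha, hb => by
      rw [liftW]; exact congrArg (Walk.cons h) (liftW_map p h.2.2 hb)

lemma path_unique (hF : (G.induce ({v}ᶜ : Set V)).IsAcyclic) :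
    ∀ {a b : V} (p q : (F G v).Path a b), p = q := by
  intro a b p q
  by_cases hb : b = v
  · have ha : a = v := reach_v G v ⟨p.1.copy rfl hb⟩
    have key : ∀ r : (F G v).Path a b, r.1 = (Walk.nil.copy ha.symm hb.symm : (F G v).Walk a b) := by
      intro r
      have h1 : r.1.copy ha hb = Walk.nil := Walk.isPath_iff_eq_nil.mp
        ((Walk.isPath_copy _ _ _).mpr r.2)
      have : r.1 = (r.1.copy ha hb).copy ha.symm hb.symm := by
        rw [Walk.copy_copy, Walk.copy_rfl_rfl]
      rw [this, h1]
    exact Subtype.ext ((key p).trans (key q).symm)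
  · have ha : a ≠ v := by
      intro h
      exact hb (walk_to_v G v (p.1.copy h rfl).reverse rfl)
    have hlift : ∀ r : (F G v).Path a b,
        ((liftW G v r.1 ha hb).IsPath) := by
      intro r
      rw [Walk.isPath_def]
      apply List.Nodup.of_map (⇑(down G v))
      have h1 : ((liftW G v r.1 ha hb).map (down G v)).support
          = (liftW G v r.1 ha hb).support.map (down G v) := Walk.support_map _ _
      rw [liftW_map] at h1
      rw [← h1]
      exact r.2.support_nodup
    have hup := isAcyclic_iff_path_unique.mp hF
      ⟨liftW G v p.1 ha hb, hlift p⟩ ⟨liftW G v q.1 ha hb, hlift q⟩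
    have := congrArg (fun r : (G.induce ({v}ᶜ : Set V)).Path _ _ =>
      (r.1.map (down G v))) hup
    simp only [liftW_map] at this
    exact Subtype.ext this

lemma isPath_concat {a b c : V} {p : (F G v).Walk a b} (hp : p.IsPath)
    (h : (F G v).Adj b c) (hc : c ∉ p.support) : (p.concat h).IsPath := by
  rw [← Walk.isPath_reverse_iff, Walk.reverse_concat]
  rw [Walk.cons_isPath_iff]
  exact ⟨hp.reverse, by rwa [Walk.support_reverse, List.mem_reverse]⟩

lemma concat_of_mem (hPU : ∀ {a b : V} (p q : (F G v).Path a b), p = q)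
    {r a b : V} (p : (F G v).Walk r b) (hp : p.IsPath) (hadj : (F G v).Adj a b)
    (hmem : a ∈ p.support) : p = (p.takeUntil a hmem).concat hadj := by
  have hdrop : (⟨p.dropUntil a hmem, hp.dropUntil hmem⟩ : (F G v).Path a b)
      = SimpleGraph.Path.singleton hadj := hPU _ _
  have h2 : p.dropUntil a hmem = Walk.cons hadj Walk.nil := congrArg Subtype.val hdrop
  conv_lhs => rw [← Walk.take_spec p hmem]
  rw [h2, Walk.concat_eq_append]

lemma concat_cancel {r x y z : V} {p : (F G v).Walk r x} {q : (F G v).Walk r y}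
    (hx : (F G v).Adj x z) (hy : (F G v).Adj y z)
    (h : p.concat hx = q.concat hy) : x = y := by
  have hs := congrArg Walk.support h
  rw [Walk.support_concat, Walk.support_concat] at hs
  have hs' : p.support = q.support := by
    have := congrArg List.dropLast hs
    rwa [List.dropLast_concat, List.dropLast_concat] at this
  have h1 : p.support.getLast? = some x := by
    rw [List.getLast?_eq_getLast_of_ne_nil (by simp), Walk.getLast_support]
  have h2 : q.support.getLast? = some y := by
    rw [List.getLast?_eq_getLast_of_ne_nil (by simp), Walk.getLast_support]
  rw [hs', h2] at h1
  exact (Option.some_inj.mp h1).symm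


open Classical in
noncomputable def somePath {a b : V} (h : (F G v).Reachable a b) : (F G v).Path a b :=
  (Classical.choice (by exact h : Nonempty ((F G v).Walk a b))).toPath

variable [DecidableRel G.Adj]

lemma exists_leaf (hPU : ∀ {a b : V} (p q : (F G v).Path a b), p = q) (w : V) (hw : w ≠ v) :
    ∃ u, (F G v).Reachable w u ∧ ((G.neighborFinset u).erase v).card ≤ 1 := by
  classical
  set m : V → ℕ := fun u =>
    if h : (F G v).Reachable w u then (somePath G v h).1.length else 0 with hm
  obtain ⟨u, hu, hmax⟩ := Finset.exists_max_image
    (Finset.univ.filter fun u => (F G v).Reachable w u) m ⟨w, Finset.mem_filter.mpr ⟨Finset.mem_univ _, Reachable.refl w⟩⟩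
  rw [Finset.mem_filter] at hu
  have hru : (F G v).Reachable w u := hu.2
  refine ⟨u, hru, ?_⟩
  have huv : u ≠ v := fun h => hw (reach_v G v (h ▸ hru))
  set q : (F G v).Path w u := somePath G v hru with hq
  have hmu : m u = q.1.length := by rw [hm]; simp only [dif_pos hru]; rfl
  have key : ∀ x (hadj : (F G v).Adj u x), ∃ (hx : x ∈ q.1.support),
      q.1 = (q.1.takeUntil x hx).concat hadj.symm := by
    intro x hadj
    by_cases hmem : x ∈ q.1.support
    · exact ⟨hmem, concat_of_mem G v hPU q.1 q.2 hadj.symm hmem⟩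
    · exfalso
      have hrx : (F G v).Reachable w x := hru.trans hadj.reachable
      have hpx : (q.1.concat hadj).IsPath := isPath_concat G v q.2 hadj hmem
      have heq : somePath G v hrx = ⟨q.1.concat hadj, hpx⟩ := hPU _ _
      have hmx : m x = q.1.length + 1 := by
        rw [hm]; simp only [dif_pos hrx, heq]; exact Walk.length_concat _ _
      have := hmax x (by simp [hrx])
      omega
  refine Finset.card_le_one.mpr ?_
  intro a ha b hb
  rw [Finset.mem_erase, mem_neighborFinset] at ha hb
  have haF : (F G v).Adj u a := ⟨ha.2, huv, ha.1⟩
  have hbF : (F G v).Adj u b := ⟨hb.2, huv, hb.1⟩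
  obtain ⟨hxa, hda⟩ := key a haF
  obtain ⟨hxb, hdb⟩ := key b hbF
  exact concat_cancel G v _ _ (hda.symm.trans hdb)

open Classical in
/-- A choice of root for the `F`-component of each vertex: a neighbor of `v` if the
component contains one, otherwise a vertex of `F`-degree at most 1. -/
noncomputable def RtC (C : (F G v).ConnectedComponent) : V :=
  if h : ∃ u, G.Adj v u ∧ (F G v).connectedComponentMk u = C
    then h.choose
  else if h2 : ∃ u, ((G.neighborFinset u).erase v).card ≤ 1 ∧
      (F G v).connectedComponentMk u = C
    then h2.choose
  else Quot.out C

noncomputable def Rt (w : V) : V := RtC G v ((F G v).connectedComponentMk w)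

lemma Rt_comp (w : V) :
    (F G v).connectedComponentMk (Rt G v w) = (F G v).connectedComponentMk w := by
  rw [Rt, RtC]
  split_ifs with h h2
  · exact h.choose_spec.2
  · exact h2.choose_spec.2
  · exact Quot.out_eq _

lemma Rt_const {a b : V}
    (h : (F G v).connectedComponentMk a = (F G v).connectedComponentMk b) :
    Rt G v a = Rt G v b := by
  rw [Rt, Rt, h]

lemma reach_Rt (w : V) : (F G v).Reachable (Rt G v w) w :=
  (SimpleGraph.ConnectedComponent.eq).mp (Rt_comp G v w)

lemma Rt_vadj {w : V} (h : G.Adj v w) : G.Adj v (Rt G v w) := by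
  have hex : ∃ u, G.Adj v u ∧ (F G v).connectedComponentMk u = (F G v).connectedComponentMk w :=
    ⟨w, h, rfl⟩
  rw [Rt, RtC, dif_pos hex]
  exact hex.choose_spec.1

lemma Rt_leaf (hPU : ∀ {a b : V} (p q : (F G v).Path a b), p = q) {w : V} (hw : w ≠ v)
    (hnadj : ¬ G.Adj v (Rt G v w)) :
    ((G.neighborFinset (Rt G v w)).erase v).card ≤ 1 := by
  by_cases hex : ∃ u, G.Adj v u ∧ (F G v).connectedComponentMk u = (F G v).connectedComponentMk w
  · exfalso
    rw [Rt, RtC, dif_pos hex] at hnadj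
    exact hnadj hex.choose_spec.1
  · obtain ⟨u, hruu, hlf⟩ := exists_leaf G v hPU w hw
    have hex2 : ∃ u, ((G.neighborFinset u).erase v).card ≤ 1 ∧
        (F G v).connectedComponentMk u = (F G v).connectedComponentMk w :=
      ⟨u, hlf, SimpleGraph.ConnectedComponent.sound hruu.symm⟩
    rw [Rt, RtC, dif_neg hex, dif_pos hex2]
    exact hex2.choose_spec.1


noncomputable def Pw (w : V) : (F G v).Path (Rt G v w) w := somePath G v (reach_Rt G v w)

noncomputable def len (w : V) : ℕ := (Pw G v w).1.length

noncomputable def cnt (w : V) : ℕ :=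
  (Pw G v w).1.support.countP (fun u => decide (Even (G.degree u)))

open Fin.NatCast in
noncomputable def chi (w : V) : Fin 2 := (cnt G v w : Fin 2)

noncomputable def eps (w : V) : Fin 2 :=
  if (w = v ∧ Even (G.degree w)) ∨ (w ≠ v ∧ Even (G.degree w)) then 1 else 0

noncomputable def dcol (w : V) : Fin 2 :=
  if Rt G v w = w then chi G v w + eps G v w else chi G v w

noncomputable def fcol : Sym2 V → Fin 2 :=
  Sym2.lift ⟨fun a b =>
    if a = v then dcol G v b
    else if b = v then dcol G v a
    else if len G v a < len G v b then chi G v a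
    else if len G v b < len G v a then chi G v b
    else 0, by
    intro a b
    dsimp only
    by_cases ha : a = v <;> by_cases hb : b = v
    · subst ha; rw [hb]
    · simp [ha, hb]
    · simp [ha, hb]
    · simp only [ha, hb, if_false]
      rcases lt_trichotomy (len G v a) (len G v b) with h | h | h
      · rw [if_pos h, if_neg (by omega), if_pos h]
      · rw [if_neg (by omega), if_neg (by omega), if_neg (by omega), if_neg (by omega)]
      · rw [if_neg (by omega), if_pos h, if_pos h]⟩

lemma fcol_v (w : V) (hw : w ≠ v) : fcol G v s(v, w) = dcol G v w := by
  rw [fcol, Sym2.lift_mk]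
  simp

lemma fcol_child {w u : V} (hw : w ≠ v) (hu : u ≠ v) (h : len G v u = len G v w + 1) :
    fcol G v s(w, u) = chi G v w := by
  rw [fcol, Sym2.lift_mk]
  dsimp only
  rw [if_neg hw, if_neg hu, if_pos (by omega)]

lemma fcol_par {w u : V} (hw : w ≠ v) (hu : u ≠ v) (h : len G v w = len G v u + 1) :
    fcol G v s(w, u) = chi G v u := by
  rw [fcol, Sym2.lift_mk]
  dsimp only
  rw [if_neg hw, if_neg hu, if_neg (by omega), if_pos (by omega)]

lemma Rt_adj_eq {w u : V} (hadj : (F G v).Adj w u) : Rt G v u = Rt G v w :=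
  Rt_const G v (SimpleGraph.ConnectedComponent.sound hadj.symm.reachable)

lemma len_root {w : V} (h : Rt G v w = w) : len G v w = 0 := by
  have h1 : ((Pw G v w).1.copy h rfl).IsPath := (Walk.isPath_copy _ _ _).mpr (Pw G v w).2
  have h2 := Walk.isPath_iff_eq_nil.mp h1
  have h3 := congrArg Walk.length h2
  rw [Walk.length_copy] at h3
  simpa [len] using h3

lemma root_of_len0 {w : V} (h : len G v w = 0) : Rt G v w = w :=
  Walk.eq_of_length_eq_zero (p := (Pw G v w).1) h

lemma eps_eq (w : V) : eps G v w = if Even (G.degree w) then (1 : Fin 2) else 0 := by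
  rw [eps]
  by_cases h : Even (G.degree w) <;> by_cases h2 : w = v <;> simp [h, h2]

open Fin.NatCast in
lemma cast_ite_nat (c : Prop) [Decidable c] :
    (((if c then 1 else 0 : ℕ) : Fin 2)) = if c then (1 : Fin 2) else 0 := by
  split_ifs <;> simp

open Fin.NatCast in
lemma dich (hPU : ∀ {a b : V} (p q : (F G v).Path a b), p = q) {w u : V}
    (hadj : (F G v).Adj w u) :
    (len G v u = len G v w + 1 ∧ chi G v u = chi G v w + eps G v u) ∨
    (len G v w = len G v u + 1 ∧ chi G v w = chi G v u + eps G v w ∧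
      (Pw G v w).1 = ((Pw G v u).1.copy (Rt_adj_eq G v hadj) rfl).concat hadj.symm) := by
  have hru : Rt G v u = Rt G v w := Rt_adj_eq G v hadj
  set p := (Pw G v w).1 with hp
  set qq := (Pw G v u).1.copy (Rt_adj_eq G v hadj) rfl with hqq
  have hqpath : qq.IsPath := (Walk.isPath_copy _ _ _).mpr (Pw G v u).2
  by_cases hmem : u ∈ p.support
  · right
    have hdec : p = (p.takeUntil u hmem).concat hadj.symm :=
      concat_of_mem G v hPU p (Pw G v w).2 hadj.symm hmem
    have ht : (⟨p.takeUntil u hmem, (Pw G v w).2.takeUntil hmem⟩ : (F G v).Path _ _)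
        = ⟨qq, hqpath⟩ := hPU _ _
    have ht' : p.takeUntil u hmem = qq := congrArg Subtype.val ht
    rw [ht'] at hdec
    have hdec' : p = qq.concat hadj.symm := hdec
    have hlen : len G v w = len G v u + 1 := by
      have := congrArg Walk.length hdec'
      rw [Walk.length_concat, hqq, Walk.length_copy] at this
      exact this
    refine ⟨hlen, ?_, hdec'⟩
    have hsupp : p.support = (Pw G v u).1.support ++ [w] := by
      rw [hdec', Walk.support_concat, hqq, Walk.support_copy]
    have hcnt : cnt G v w = cnt G v u + (if Even (G.degree w) then 1 else 0) := by
      simp only [cnt]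
      rw [show (Pw G v w).1.support = (Pw G v u).1.support ++ [w] from hsupp, List.countP_append]
      simp [List.countP_cons]
    rw [chi, chi, hcnt, Nat.cast_add, cast_ite_nat, eps_eq]
  · left
    have hpx : (p.concat hadj).IsPath := isPath_concat G v (Pw G v w).2 hadj hmem
    have ht : (⟨qq, hqpath⟩ : (F G v).Path _ _) = ⟨p.concat hadj, hpx⟩ := hPU _ _
    have hqe : qq = p.concat hadj := congrArg Subtype.val ht
    have hlen : len G v u = len G v w + 1 := by
      have := congrArg Walk.length hqe
      rw [Walk.length_concat, hqq, Walk.length_copy] at this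
      exact this
    refine ⟨hlen, ?_⟩
    have hsupp : (Pw G v u).1.support = p.support ++ [u] := by
      have := congrArg Walk.support hqe
      rw [hqq, Walk.support_copy, Walk.support_concat] at this
      exact this
    have hcnt : cnt G v u = cnt G v w + (if Even (G.degree u) then 1 else 0) := by
      simp only [cnt]
      rw [show (Pw G v u).1.support = (Pw G v w).1.support ++ [u] from hsupp, List.countP_append]
      simp [List.countP_cons]
    rw [chi, chi, hcnt, Nat.cast_add, cast_ite_nat, eps_eq]


lemma cc (f : Sym2 V → Fin 2) (w : V) (i : Fin 2) :
    colorCount G f w i = ((G.neighborFinset w).filter (fun u => f s(w, u) = i)).card := by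
  unfold colorCount
  have himg : G.incidenceFinset w = (G.neighborFinset w).image (fun u => s(w, u)) := by
    ext e
    induction e with
    | _ x y =>
      rw [mem_incidenceFinset, mk'_mem_incidenceSet_iff, Finset.mem_image]
      constructor
      · rintro ⟨hadj, (rfl | rfl)⟩
        · exact ⟨y, mem_neighborFinset _ _ _ |>.mpr hadj, rfl⟩
        · exact ⟨x, mem_neighborFinset _ _ _ |>.mpr hadj.symm, Sym2.eq_swap⟩
      · rintro ⟨u, hu, heq⟩
        have hadj : G.Adj w u := (mem_neighborFinset _ _ _).mp hu
        rcases Sym2.eq_iff.mp heq with ⟨rfl, rfl⟩ | ⟨rfl, rfl⟩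
        · exact ⟨hadj, Or.inl rfl⟩
        · exact ⟨hadj.symm, Or.inr rfl⟩
  rw [himg, Finset.filter_image, Finset.card_image_of_injective]
  intro x y hxy
  exact Sym2.congr_right.mp hxy

lemma cc_sum (f : Sym2 V → Fin 2) (w : V) :
    colorCount G f w 0 + colorCount G f w 1 = G.degree w := by
  rw [cc, cc, ← card_neighborFinset_eq_degree]
  have hpart := Finset.card_filter_add_card_filter_not
    (s := G.neighborFinset w) (p := fun u => f s(w, u) = 0)
  have hfc : (G.neighborFinset w).filter (fun a => ¬ f s(w, a) = 0)
      = (G.neighborFinset w).filter (fun u => f s(w, u) = 1) := by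
    apply Finset.filter_congr
    intro x _
    have h2 : ∀ z : Fin 2, ¬ z = 0 ↔ z = 1 := by decide
    exact h2 _
  rw [hfc] at hpart
  exact hpart

lemma fin2_cases (i j : Fin 2) : i = j ∨ i = j + 1 := by revert i j; decide

lemma fin2_succ_ne (j : Fin 2) : j + 1 ≠ j := by revert j; decide

lemma fin2_symm {a b : Fin 2} (h : a = b + 1) : b = a + 1 := by revert h; revert a b; decide

lemma oddAt_away (hPU : ∀ {a b : V} (p q : (F G v).Path a b), p = q) (w : V) (hw : w ≠ v) :
    OddAt G (fcol G v) w := by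
  intro i
  rw [cc]
  by_cases hodd : Odd (G.degree w)
  · -- all edges at w have color `chi w`
    have heps : eps G v w = 0 := by
      rw [eps_eq, if_neg (Nat.not_even_iff_odd.mpr hodd)]
    have hall : ∀ u ∈ G.neighborFinset w, fcol G v s(w, u) = chi G v w := by
      intro u hu
      have hadj : G.Adj w u := (mem_neighborFinset _ _ _).mp hu
      by_cases huv : u = v
      · rw [huv, Sym2.eq_swap, fcol_v G v w hw, dcol]
        split_ifs with h
        · rw [heps, add_zero]
        · rfl
      · have hFadj : (F G v).Adj w u := ⟨hadj, hw, huv⟩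
        rcases dich G v hPU hFadj with ⟨h1, _⟩ | ⟨h1, h2, _⟩
        · exact fcol_child G v hw huv h1
        · rw [fcol_par G v hw huv h1, h2, heps, add_zero]
    rcases fin2_cases i (chi G v w) with rfl | rfl
    · right
      rw [Finset.filter_true_of_mem (fun u hu => hall u hu)]
      rwa [card_neighborFinset_eq_degree]
    · left
      rw [Finset.card_eq_zero, Finset.filter_eq_empty_iff]
      intro u hu
      rw [hall u hu]
      exact (fin2_succ_ne _).symm
  · -- even degree
    have heven : Even (G.degree w) := Nat.not_odd_iff_even.mp hodd
    by_cases hd0 : G.degree w = 0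
    · left
      have hN : G.neighborFinset w = ∅ := by
        rw [← Finset.card_eq_zero, card_neighborFinset_eq_degree, hd0]
      rw [hN]
      simp
    · have heps : eps G v w = 1 := by rw [eps_eq, if_pos heven]
      obtain ⟨up, hupmem, hupcol, hrest⟩ : ∃ up ∈ G.neighborFinset w,
          fcol G v s(w, up) = chi G v w + 1 ∧
          ∀ u ∈ G.neighborFinset w, u ≠ up → fcol G v s(w, u) = chi G v w := by
        by_cases hroot : Rt G v w = w
        · -- w is a root; it must be adjacent to v
          have hadjv : G.Adj w v := by
            by_contra hnadj
            have hleaf := Rt_leaf G v hPU hw (by rw [hroot]; exact fun h => hnadj h.symm)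
            rw [hroot] at hleaf
            have hveq : (G.neighborFinset w).erase v = G.neighborFinset w := by
              apply Finset.erase_eq_of_notMem
              rw [mem_neighborFinset]
              exact hnadj
            rw [hveq, card_neighborFinset_eq_degree] at hleaf
            obtain ⟨k, hk⟩ := heven
            omega
          refine ⟨v, (mem_neighborFinset _ _ _).mpr hadjv, ?_, ?_⟩
          · rw [Sym2.eq_swap, fcol_v G v w hw, dcol, if_pos hroot, heps]
          · intro u hu hne
            have hadj : G.Adj w u := (mem_neighborFinset _ _ _).mp hu
            have hFadj : (F G v).Adj w u := ⟨hadj, hw, hne⟩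
            rcases dich G v hPU hFadj with ⟨h1, _⟩ | ⟨h1, _, _⟩
            · exact fcol_child G v hw hne h1
            · exfalso
              have := len_root G v hroot
              omega
        · -- w is not a root; find the parent
          have hlen0 : len G v w ≠ 0 := fun h => hroot (root_of_len0 G v h)
          obtain ⟨pa, hpa_adj, t, hprod⟩ :=
            Walk.exists_eq_cons_of_ne (fun h => hroot h.symm) (Pw G v w).1.reverse
          have hpa_adj' : (F G v).Adj w pa := hpa_adj
          have hprev : (Pw G v w).1.reverse.IsPath := (Pw G v w).2.reverse
          rw [hprod] at hprev
          have htpath : t.IsPath := hprev.of_cons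
          have htrev : t.reverse = (Pw G v pa).1.copy (Rt_adj_eq G v hpa_adj') rfl := by
            have h1 : (⟨t.reverse, htpath.reverse⟩ : (F G v).Path _ _)
                = ⟨(Pw G v pa).1.copy (Rt_adj_eq G v hpa_adj') rfl,
                   (Walk.isPath_copy _ _ _).mpr (Pw G v pa).2⟩ := hPU _ _
            exact congrArg Subtype.val h1
          have hlenpa : len G v w = len G v pa + 1 := by
            have h1 : (Pw G v w).1.reverse.length = t.length + 1 := by
              rw [hprod]; simp
            have h2 : t.length = len G v pa := by
              have h3 := congrArg Walk.length htrev
              rw [Walk.length_reverse, Walk.length_copy] at h3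
              exact h3
            have h3 : (Pw G v w).1.reverse.length = (Pw G v w).1.length :=
              Walk.length_reverse _
            simp only [len] at *
            omega
          rcases dich G v hPU hpa_adj' with ⟨h1, _⟩ | ⟨h1, h2, hweq⟩
          · exfalso; omega
          · have hpachi : chi G v pa = chi G v w + 1 := by
              rw [heps] at h2; exact fin2_symm h2
            refine ⟨pa, (mem_neighborFinset _ _ _).mpr hpa_adj'.1, ?_, ?_⟩
            · rw [fcol_par G v hw hpa_adj'.2.2 h1, hpachi]
            · intro u hu hne
              by_cases huv : u = v
              · rw [huv, Sym2.eq_swap, fcol_v G v w hw, dcol, if_neg hroot]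
              · have hFadj : (F G v).Adj w u := ⟨(mem_neighborFinset _ _ _).mp hu, hw, huv⟩
                rcases dich G v hPU hFadj with ⟨hc1, _⟩ | ⟨hc1, hc2, hueq⟩
                · exact fcol_child G v hw huv hc1
                · exact absurd (concat_cancel G v _ _ (hueq.symm.trans hweq)) hne
      -- counting
      rcases fin2_cases i (chi G v w) with rfl | rfl
      · right
        have hfe : (G.neighborFinset w).filter (fun u => fcol G v s(w, u) = chi G v w)
            = (G.neighborFinset w).erase up := by
          ext u
          rw [Finset.mem_filter, Finset.mem_erase]
          constructor
          · rintro ⟨hu, hcol⟩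
            refine ⟨?_, hu⟩
            rintro rfl
            rw [hupcol] at hcol
            exact fin2_succ_ne _ hcol
          · rintro ⟨hne, hu⟩
            exact ⟨hu, hrest u hu hne⟩
        rw [hfe, Finset.card_erase_of_mem hupmem, card_neighborFinset_eq_degree]
        obtain ⟨k, hk⟩ := heven
        refine ⟨k - 1, by omega⟩
      · right
        have hfe : (G.neighborFinset w).filter (fun u => fcol G v s(w, u) = chi G v w + 1)
            = {up} := by
          ext u
          rw [Finset.mem_filter, Finset.mem_singleton]
          constructor
          · rintro ⟨hu, hcol⟩
            by_contra hne
            rw [hrest u hu hne] at hcol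
            exact fin2_succ_ne _ hcol.symm
          · rintro rfl
            exact ⟨hupmem, hupcol⟩
        rw [hfe, Finset.card_singleton]
        exact odd_one


lemma fin2_shift (x i : Fin 2) : x + 1 = i ↔ x = i + 1 := by revert x i; decide

end OddEdgeAux

theorem odd_away_with_parity_at_v (G : SimpleGraph V) [DecidableRel G.Adj]
    (v : V) (hF : (G.induce ({v}ᶜ : Set V)).IsAcyclic) (hdeg : Odd (G.degree v)) :
    ∃ f : Sym2 V → Fin 2, (∀ w : V, w ≠ v → OddAt G f w) ∧
      Odd (colorCount G f v 0) ∧ Even (colorCount G f v 1) := by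
  classical
  have hPU : ∀ {a b : V} (p q : (OddEdgeAux.F G v).Path a b), p = q :=
    fun {a b} => OddEdgeAux.path_unique G v hF
  set f0 := OddEdgeAux.fcol G v with hf0
  have hN : ∀ u ∈ G.neighborFinset v, u ≠ v := fun u hu =>
    ((mem_neighborFinset _ _ _).mp hu).ne'
  by_cases hpar : Even (((G.neighborFinset v).filter (fun u => f0 s(v, u) = 1)).card)
  · refine ⟨f0, fun w hw => OddEdgeAux.oddAt_away G v hPU w hw, ?_, ?_⟩
    · have hsum := OddEdgeAux.cc_sum G f0 v
      have heven1 : Even (colorCount G f0 v 1) := by rw [OddEdgeAux.cc]; exact hpar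
      rw [Nat.odd_iff] at hdeg ⊢
      rw [Nat.even_iff] at heven1
      omega
    · rw [OddEdgeAux.cc]; exact hpar
  · have hodd1 : Odd (((G.neighborFinset v).filter (fun u => f0 s(v, u) = 1)).card) :=
      Nat.not_even_iff_odd.mp hpar
    have hcardN : Odd (G.neighborFinset v).card := by
      rwa [card_neighborFinset_eq_degree]
    set cmp := fun u => (OddEdgeAux.F G v).connectedComponentMk u with hcmp
    have hfib := Finset.card_eq_sum_card_fiberwise
      (s := G.neighborFinset v) (t := (G.neighborFinset v).image cmp) (f := cmp)
      (fun x hx => Finset.mem_image_of_mem _ hx)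
    obtain ⟨C0, _, hC0odd⟩ : ∃ C ∈ (G.neighborFinset v).image cmp,
        Odd (((G.neighborFinset v).filter (fun u => cmp u = C)).card) := by
      by_contra hall
      push_neg at hall
      have hev : Even ((G.neighborFinset v).card) := by
        rw [hfib]
        apply Finset.even_sum
        intro C hC
        exact Nat.not_odd_iff_even.mp (hall C hC)
      exact (Nat.not_odd_iff_even.mpr hev) hcardN
    set fl : Sym2 V → Fin 2 := Sym2.lift ⟨fun a b =>
      if (a ≠ v ∧ cmp a = C0) ∨ (b ≠ v ∧ cmp b = C0) then 1 else 0, by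
        intro a b; dsimp only; exact if_congr or_comm rfl rfl⟩ with hfl
    set f1 : Sym2 V → Fin 2 := fun e => f0 e + fl e with hf1
    have hflip_all : ∀ w, w ≠ v → cmp w = C0 → ∀ u, fl s(w, u) = 1 := by
      intro w hw hcw u
      rw [hfl, Sym2.lift_mk]
      dsimp only
      rw [if_pos (Or.inl ⟨hw, hcw⟩)]
    have hflip_none : ∀ w, w ≠ v → cmp w ≠ C0 → ∀ u, G.Adj w u → fl s(w, u) = 0 := by
      intro w hw hcw u hadj
      rw [hfl, Sym2.lift_mk]
      dsimp only
      rw [if_neg]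
      rintro (⟨_, h⟩ | ⟨huv, h⟩)
      · exact hcw h
      · have hcc : cmp w = cmp u := SimpleGraph.ConnectedComponent.sound
          (SimpleGraph.Adj.reachable ⟨hadj, hw, huv⟩)
        exact hcw (hcc.trans h)
    have hoddaway : ∀ w, w ≠ v → OddAt G f1 w := by
      intro w hw
      by_cases hcw : cmp w = C0
      · intro i
        have hcc : colorCount G f1 w i = colorCount G f0 w (i + 1) := by
          rw [OddEdgeAux.cc, OddEdgeAux.cc]
          congr 1
          apply Finset.filter_congr
          intro u hu
          rw [hf1]
          dsimp only
          rw [hflip_all w hw hcw u]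
          exact OddEdgeAux.fin2_shift _ _
        rw [hcc]
        exact OddEdgeAux.oddAt_away G v hPU w hw (i + 1)
      · intro i
        have hcc : colorCount G f1 w i = colorCount G f0 w i := by
          rw [OddEdgeAux.cc, OddEdgeAux.cc]
          congr 1
          apply Finset.filter_congr
          intro u hu
          rw [hf1]
          dsimp only
          rw [hflip_none w hw hcw u ((mem_neighborFinset _ _ _).mp hu), add_zero]
        rw [hcc]
        exact OddEdgeAux.oddAt_away G v hPU w hw i
    have hflv : ∀ u ∈ G.neighborFinset v, fl s(v, u) = (if cmp u = C0 then (1 : Fin 2) else 0) := by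
      intro u hu
      rw [hfl, Sym2.lift_mk]
      dsimp only
      by_cases h : cmp u = C0
      · rw [if_pos (Or.inr ⟨hN u hu, h⟩), if_pos h]
      · rw [if_neg, if_neg h]
        rintro (⟨hv, _⟩ | ⟨_, hc⟩)
        · exact hv rfl
        · exact h hc
    have key : ((G.neighborFinset v).filter (fun u => f1 s(v, u) = 1)).card
        + ((G.neighborFinset v).filter (fun u => cmp u = C0 ∧ f0 s(v, u) = 1)).card
        + ((G.neighborFinset v).filter (fun u => cmp u = C0 ∧ f0 s(v, u) = 1)).card
        = ((G.neighborFinset v).filter (fun u => cmp u = C0)).card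
          + ((G.neighborFinset v).filter (fun u => f0 s(v, u) = 1)).card := by
      simp only [Finset.card_filter]
      rw [← Finset.sum_add_distrib, ← Finset.sum_add_distrib, ← Finset.sum_add_distrib]
      apply Finset.sum_congr rfl
      intro u hu
      have hfv := hflv u hu
      rw [hf1]
      dsimp only
      simp only [hfv]
      by_cases h : cmp u = C0 <;>
        rcases OddEdgeAux.fin2_cases (f0 s(v, u)) 0 with h0 | h0 <;>
        rw [h0] <;> simp [h]
    have heven1 : Even (colorCount G f1 v 1) := by
      rw [OddEdgeAux.cc]
      rw [Nat.even_iff]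
      rw [Nat.odd_iff] at hC0odd hodd1
      omega
    have hsum := OddEdgeAux.cc_sum G f1 v
    have hodd0 : Odd (colorCount G f1 v 0) := by
      rw [Nat.odd_iff] at hdeg ⊢
      rw [Nat.even_iff] at heven1
      omega
    exact ⟨f1, hoddaway, hodd0, heven1⟩
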